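/- In any finite subset X of the Euclidean plane with all pairwise distances distinct and |X| ≥ 2, at most 7/9 of the elements of X fail to be the nearest neighbour of some other element, i.e., |{x ∈ X : ∀y ∈ X \ {x}, nn(y) ≠ x}| ≤ (7/9)|X|. -/

import Mathlib

open scoped Classical
open Complex Real

noncomputable section

namespace NN7

abbrev EE := EuclideanSpace ℝ (Fin 2)

/-- `Pnn X x y` : `x` is the (strict) nearest neighbour of `y` in `X`. -/
def Pnn (X : Finset EE) (x y : EE) : Prop :=
  x ∈ X ∧ y ∈ X ∧ y ≠ x ∧ ∀ z ∈ X, z ≠ y → z ≠ x → dist y x < dist y z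

lemma nn_unique {X : Finset EE} {x x' y : EE} (h : Pnn X x y) (h' : Pnn X x' y) :
    x = x' := by
  by_contra hne
  obtain ⟨hx, hy, hyx, hmin⟩ := h
  obtain ⟨hx', hy', hyx', hmin'⟩ := h'
  have h1 := hmin x' hx' (Ne.symm hyx') (fun h => hne h.symm)
  have h2 := hmin' x hx (Ne.symm hyx) hne
  linarith

lemma nn_exists {X : Finset EE}
    (hdist : ∀ x ∈ X, ∀ y ∈ X, ∀ x' ∈ X, ∀ y' ∈ X, x ≠ y → x' ≠ y' →
      dist x y = dist x' y' → ({x, y} : Set EE) = {x', y'})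
    (hcard : 2 ≤ X.card) {y : EE} (hy : y ∈ X) : ∃ x, Pnn X x y := by
  have hne : (X.erase y).Nonempty := by
    rw [← Finset.card_pos, Finset.card_erase_of_mem hy]; omega
  obtain ⟨x, hx, hmin⟩ := Finset.exists_min_image (X.erase y) (fun z => dist y z) hne
  have hxX := Finset.mem_of_mem_erase hx
  have hxy : x ≠ y := Finset.ne_of_mem_erase hx
  refine ⟨x, hxX, hy, hxy.symm, fun z hz hzy hzx => ?_⟩
  have hle := hmin z (Finset.mem_erase.2 ⟨hzy, hz⟩)
  rcases lt_or_eq_of_le hle with h | h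
  · exact h
  · exfalso
    have := hdist y hy x hxX y hy z hz (Ne.symm hxy) (Ne.symm hzy) h
    have hxm : x ∈ ({y, z} : Set EE) := by rw [← this]; exact Set.mem_insert_of_mem _ rfl
    rcases hxm with h' | h'
    · exact hxy h'
    · exact hzx (by simpa using h'.symm)

lemma gap_pigeon (n : ℕ) (hn : 0 < n) (L : ℝ) (f : Fin (n+1) → ℝ)
    (hf : ∀ i, L ≤ f i ∧ f i ≤ L + n * (π/3)) :
    ∃ i j, i ≠ j ∧ |f i - f j| ≤ π/3 := by
  have hπ : (0:ℝ) < π/3 := by positivity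
  set q : Fin (n+1) → ℕ := fun a => ⌊(f a - L)/(π/3)⌋₊ with hq
  set g : Fin (n+1) → Fin n := fun a => ⟨min (q a) (n-1), by omega⟩ with hg
  have key : ∀ a, ((min (q a) (n-1) : ℕ) : ℝ)*(π/3) ≤ f a - L ∧
      f a - L ≤ (((min (q a) (n-1) : ℕ) : ℝ)+1)*(π/3) := by
    intro a
    have h1 := (hf a).1
    have h2 := (hf a).2
    have hnn : (0:ℝ) ≤ (f a - L)/(π/3) := div_nonneg (by linarith) hπ.le
    have hlow : ((q a : ℕ) : ℝ) ≤ (f a - L)/(π/3) := Nat.floor_le hnn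
    have hhigh : (f a - L)/(π/3) < ((q a : ℕ) : ℝ) + 1 := Nat.lt_floor_add_one _
    have hlow' : ((q a : ℕ) : ℝ) * (π/3) ≤ f a - L := by
      have := mul_le_mul_of_nonneg_right hlow hπ.le
      calc ((q a : ℕ) : ℝ) * (π/3) ≤ ((f a - L)/(π/3)) * (π/3) := this
        _ = f a - L := by field_simp
    have hhigh' : f a - L < (((q a : ℕ) : ℝ) + 1) * (π/3) := by
      have := mul_lt_mul_of_pos_right hhigh hπ
      calc f a - L = ((f a - L)/(π/3)) * (π/3) := by field_simp
        _ < (((q a : ℕ) : ℝ) + 1) * (π/3) := this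
    rcases le_or_gt (q a) (n-1) with hc | hc
    · rw [min_eq_left hc]
      exact ⟨hlow', hhigh'.le⟩
    · rw [min_eq_right hc.le]
      have hcast : (((n-1 : ℕ) : ℝ)) = (n:ℝ) - 1 := by
        have h1n : (1:ℕ) ≤ n := hn
        push_cast [Nat.cast_sub h1n]
        ring
      have hmn : ((n:ℝ) - 1) ≤ ((q a : ℕ) : ℝ) := by
        rw [← hcast]
        exact_mod_cast Nat.cast_le.2 (show n - 1 ≤ q a by omega)
      rw [hcast]
      constructor
      · nlinarith
      · nlinarith
  have hcard : (Finset.univ : Finset (Fin n)).card < (Finset.univ : Finset (Fin (n+1))).card := by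
    simp
  obtain ⟨i, _, j, _, hij, hgij⟩ :=
    Finset.exists_ne_map_eq_of_card_lt_of_maps_to hcard (fun i _ => Finset.mem_univ (g i))
  have hvij : min (q i) (n-1) = min (q j) (n-1) := congrArg Fin.val hgij
  refine ⟨i, j, hij, ?_⟩
  have hi := key i
  have hj := key j
  rw [hvij] at hi
  rw [abs_le]
  constructor <;> nlinarith [hi.1, hi.2, hj.1, hj.2]

lemma cos_ge_half {a : ℝ} (h : |a| ≤ π/3) : 1/2 ≤ Real.cos a := by
  rw [← Real.cos_abs, ← Real.cos_pi_div_three]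
  exact Real.cos_le_cos_of_nonneg_of_le_pi (abs_nonneg a) (by linarith [Real.pi_pos]) h

lemma gap_gt {a : ℝ} (h1 : |a| ≤ π) (h : Real.cos a < 1/2) : π/3 < |a| := by
  by_contra hc
  push_neg at hc
  exact absurd (cos_ge_half hc) (by linarith)

lemma cos_arg_sub {u v : ℂ} (hu : u ≠ 0) (hv : v ≠ 0)
    (h : 2 * (u * (starRingEnd ℂ) v).re < ‖u‖ * ‖v‖) :
    Real.cos (u.arg - v.arg) < 1/2 := by
  have habu : 0 < ‖u‖ := norm_pos_iff.mpr hu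
  have habv : 0 < ‖v‖ := norm_pos_iff.mpr hv
  have hre : (u * (starRingEnd ℂ) v).re = u.re * v.re + u.im * v.im := by
    simp [Complex.mul_re, Complex.conj_re, Complex.conj_im]
  rw [hre] at h
  rw [Real.cos_sub, Complex.cos_arg hu, Complex.cos_arg hv, Complex.sin_arg, Complex.sin_arg]
  rw [div_mul_div_comm, div_mul_div_comm, ← add_div, div_lt_iff₀ (by positivity)]
  nlinarith

lemma cosDelta {u v : ℂ} (hu : u ≠ 0) (hv : v ≠ 0)
    (h1 : ‖u‖ < ‖(u - v)‖)
    (h2 : ‖v‖ < ‖(u - v)‖) :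
    Real.cos (u.arg - v.arg) < 1/2 := by
  apply cos_arg_sub hu hv
  have hlaw : ‖(u - v)‖ ^ 2 = ‖u‖ ^ 2 + ‖v‖ ^ 2
      - 2 * (u * (starRingEnd ℂ) v).re := by
    rw [Complex.sq_norm, Complex.sq_norm, Complex.sq_norm, Complex.normSq_sub]
  have habu : 0 < ‖u‖ := norm_pos_iff.mpr hu
  have habv : 0 < ‖v‖ := norm_pos_iff.mpr hv
  rcases le_total (‖u‖) (‖v‖) with hc | hc
  · nlinarith
  · nlinarith

lemma reduce (d : ℝ) (hd : |d| < 2*π) (hc : Real.cos d < 1/2) :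
    ∃ b : ℝ, (∃ k : ℤ, b = d + k*(2*π)) ∧ π/3 < b ∧ b < 5*(π/3) := by
  have hπ := Real.pi_pos
  rw [abs_lt] at hd
  -- first normalize to (-π, π]
  obtain ⟨δ, hk, hδ1, hδ2⟩ : ∃ δ : ℝ, (∃ k : ℤ, δ = d + k*(2*π)) ∧ -π < δ ∧ δ ≤ π := by
    rcases le_or_gt d (-π) with h | h
    · exact ⟨d + 2*π, ⟨1, by push_cast; ring⟩, by linarith, by linarith⟩
    · rcases le_or_gt d π with h' | h'
      · exact ⟨d, ⟨0, by push_cast; ring⟩, h, h'⟩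
      · exact ⟨d - 2*π, ⟨-1, by push_cast; ring⟩, by linarith, by linarith⟩
  obtain ⟨k, hkeq⟩ := hk
  have hcosδ : Real.cos δ < 1/2 := by
    rw [hkeq, Real.cos_add_int_mul_two_pi]; exact hc
  have hgap : π/3 < |δ| := gap_gt (abs_le.2 ⟨by linarith, hδ2⟩) hcosδ
  rcases le_or_gt 0 δ with h0 | h0
  · rw [_root_.abs_of_nonneg h0] at hgap
    exact ⟨δ, ⟨k, hkeq⟩, hgap, by linarith⟩
  · rw [_root_.abs_of_neg h0] at hgap
    exact ⟨δ + 2*π, ⟨k+1, by rw [hkeq]; push_cast; ring⟩, by linarith, by linarith⟩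

lemma six_dirs (v : Fin 6 → ℂ)
    (h : ∀ i j, i ≠ j → Real.cos ((v i).arg - (v j).arg) < 1/2) : False := by
  have hπ := Real.pi_pos
  set θ : Fin 6 → ℝ := fun i => (v i).arg with hθ
  have hb : ∀ i, -π < θ i ∧ θ i ≤ π := fun i => ⟨Complex.neg_pi_lt_arg _, Complex.arg_le_pi _⟩
  have hred : ∀ i : Fin 5, ∃ b : ℝ,
      (∃ k : ℤ, b = (θ i.succ - θ 0) + k*(2*π)) ∧ π/3 < b ∧ b < 5*(π/3) := by
    intro i
    apply reduce
    · rw [abs_lt]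
      constructor
      · linarith [(hb i.succ).1, (hb 0).2]
      · linarith [(hb i.succ).2, (hb 0).1]
    · exact h i.succ 0 (Fin.succ_ne_zero i)
  choose b hbk hb1 hb2 using hred
  obtain ⟨i, j, hij, habs⟩ := gap_pigeon 4 (by norm_num) (π/3) b (by
    intro i
    refine ⟨by linarith [hb1 i], ?_⟩
    have := hb2 i
    push_cast
    linarith)
  obtain ⟨ki, hki⟩ := hbk i
  obtain ⟨kj, hkj⟩ := hbk j
  have hcos : Real.cos (b i - b j) < 1/2 := by
    have : b i - b j = (θ i.succ - θ j.succ) + ((ki - kj : ℤ) : ℝ) * (2*π) := by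
      rw [hki, hkj]; push_cast; ring
    rw [this, Real.cos_add_int_mul_two_pi]
    exact h i.succ j.succ (fun hh => hij (Fin.succ_injective _ hh))
  exact absurd (cos_ge_half habs) (by linarith)

lemma exists_up (θ : Fin 4 → ℝ) (hb : ∀ i, -π ≤ θ i ∧ θ i ≤ π)
    (hg : ∀ i, π/3 < |θ i|)
    (hp : ∀ i j, i ≠ j → Real.cos (θ i - θ j) < 1/2) :
    ∃ i, π/3 < θ i ∧ θ i < 2*(π/3) := by
  have hπ := Real.pi_pos
  by_contra hcon
  push_neg at hcon
  have key : ∀ i, ∃ b : ℝ, (∃ k : ℤ, b = θ i + k*(2*π)) ∧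
      2*(π/3) ≤ b ∧ b ≤ 2*(π/3) + 3*(π/3) := by
    intro i
    rcases lt_or_ge (θ i) 0 with h0 | h0
    · have hneg : θ i < -(π/3) := by
        have : π/3 < |θ i| := hg i
        rw [_root_.abs_of_neg h0] at this
        linarith
      refine ⟨θ i + 2*π, ⟨1, by push_cast; ring⟩, by linarith [(hb i).1], by linarith⟩
    · refine ⟨θ i, ⟨0, by push_cast; ring⟩, ?_, by linarith [(hb i).2]⟩
      have : π/3 < |θ i| := hg i
      rw [_root_.abs_of_nonneg h0] at this
      exact hcon i this
  choose b hbk hb1 hb2 using key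
  obtain ⟨i, j, hij, habs⟩ := gap_pigeon 3 (by norm_num) (2*(π/3)) b (by
    intro i
    refine ⟨hb1 i, ?_⟩
    have := hb2 i
    push_cast
    linarith)
  obtain ⟨ki, hki⟩ := hbk i
  obtain ⟨kj, hkj⟩ := hbk j
  have hcos : Real.cos (b i - b j) < 1/2 := by
    have heq : b i - b j = (θ i - θ j) + ((ki - kj : ℤ) : ℝ) * (2*π) := by
      rw [hki, hkj]; push_cast; ring
    rw [heq, Real.cos_add_int_mul_two_pi]
    exact hp i j hij
  exact absurd (cos_ge_half habs) (by linarith)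

lemma exists_up' (φ : Fin 4 → ℝ) (hb : ∀ i, -(2*(π/3)) < φ i ∧ φ i < 2*(π/3))
    (hp : ∀ i j, i ≠ j → Real.cos (φ i - φ j) < 1/2) :
    ∃ i, π/3 < φ i ∧ φ i < 2*(π/3) := by
  have hπ := Real.pi_pos
  by_contra hcon
  push_neg at hcon
  have hub : ∀ i, φ i ≤ π/3 := by
    intro i
    by_contra h
    push_neg at h
    exact absurd (hcon i h) (not_le.2 (hb i).2)
  obtain ⟨i, j, hij, habs⟩ := gap_pigeon 3 (by norm_num) (-(2*(π/3))) φ (by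
    intro i
    refine ⟨(hb i).1.le, ?_⟩
    have := hub i
    push_cast
    linarith)
  exact absurd (cos_ge_half habs) (by linarith [hp i j hij])

lemma exists_low (θ : Fin 4 → ℝ) (hb : ∀ i, -π ≤ θ i ∧ θ i ≤ π)
    (hg : ∀ i, π/3 < |θ i|)
    (hp : ∀ i j, i ≠ j → Real.cos (θ i - θ j) < 1/2) :
    ∃ i, -(2*(π/3)) < θ i ∧ θ i < -(π/3) := by
  have h := exists_up (fun i => -θ i)
    (fun i => ⟨show -π ≤ -θ i by linarith [(hb i).2], show -θ i ≤ π by linarith [(hb i).1]⟩)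
    (fun i => by rw [abs_neg]; exact hg i)
    (fun i j hij => by
      have := hp j i (Ne.symm hij)
      rwa [show -θ i - -θ j = -(θ i - θ j) by ring, Real.cos_neg,
        ← Real.cos_neg, neg_sub])
  obtain ⟨i, h1, h2⟩ := h
  exact ⟨i, by linarith, by linarith⟩

lemma exists_low' (φ : Fin 4 → ℝ) (hb : ∀ i, -(2*(π/3)) < φ i ∧ φ i < 2*(π/3))
    (hp : ∀ i j, i ≠ j → Real.cos (φ i - φ j) < 1/2) :
    ∃ i, -(2*(π/3)) < φ i ∧ φ i < -(π/3) := by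
  have h := exists_up' (fun i => -φ i)
    (fun i => ⟨show -(2*(π/3)) < -φ i by linarith [(hb i).2],
      show -φ i < 2*(π/3) by linarith [(hb i).1]⟩)
    (fun i j hij => by
      have := hp j i (Ne.symm hij)
      rwa [show -φ i - -φ j = -(φ i - φ j) by ring, Real.cos_neg,
        ← Real.cos_neg, neg_sub])
  obtain ⟨i, h1, h2⟩ := h
  exact ⟨i, by linarith, by linarith⟩

lemma z_spread (θ : Fin 4 → ℝ) (hb : ∀ i, -π ≤ θ i ∧ θ i ≤ π)
    (hg : ∀ i, π/3 < |θ i|)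
    (hp : ∀ i j, i ≠ j → Real.cos (θ i - θ j) < 1/2) :
    ∃ iu il, (π/3 < θ iu ∧ θ iu < 2*(π/3)) ∧
      (-(2*(π/3)) < θ il ∧ θ il < -(π/3)) ∧ θ iu - π < θ il := by
  have hπ := Real.pi_pos
  obtain ⟨iu, hiu1, hiu2⟩ := exists_up θ hb hg hp
  obtain ⟨il, hil1, hil2⟩ := exists_low θ hb hg hp
  have hne : iu ≠ il := by intro h; rw [h] at hiu1; linarith
  refine ⟨iu, il, ⟨hiu1, hiu2⟩, ⟨hil1, hil2⟩, ?_⟩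
  by_contra hcon
  push_neg at hcon
  -- hcon : θ il ≤ θ iu - π
  have hexist : ∀ (x y : Fin 4), x ≠ y → ∃ a b : Fin 4,
      a ≠ b ∧ a ≠ x ∧ a ≠ y ∧ b ≠ x ∧ b ≠ y := by decide
  obtain ⟨a, b, hab, haiu, hail, hbiu, hbil⟩ := hexist iu il hne
  have hbeta : ∀ a, a ≠ iu → a ≠ il → ∃ b' : ℝ, (∃ k : ℤ, b' = θ a + k*(2*π)) ∧
      θ iu + π/3 < b' ∧ b' < θ iu + 2*(π/3) := by
    intro a haiu hail
    have hback : 2*(π/3) ≤ θ a ∨ θ a ≤ -(2*(π/3)) := by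
      have hga := hg a
      rcases le_or_gt 0 (θ a) with h0 | h0
      · left
        rw [_root_.abs_of_nonneg h0] at hga
        by_contra hx
        push_neg at hx
        have h1 : |θ a - θ iu| ≤ π/3 := by rw [abs_le]; constructor <;> linarith
        exact absurd (cos_ge_half h1) (by linarith [hp a iu haiu])
      · right
        rw [_root_.abs_of_neg h0] at hga
        by_contra hx
        push_neg at hx
        have h1 : |θ a - θ il| ≤ π/3 := by rw [abs_le]; constructor <;> linarith
        exact absurd (cos_ge_half h1) (by linarith [hp a il hail])
    rcases hback with hbk | hbk
    · -- θ a ∈ [2π/3, π]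
      refine ⟨θ a, ⟨0, by push_cast; ring⟩, ?_, ?_⟩
      · -- gap from iu
        have hd : |θ a - θ iu| ≤ π := by
          rw [abs_le]; constructor <;> linarith [(hb a).2]
        have := gap_gt hd (hp a iu haiu)
        rw [_root_.abs_of_nonneg (by linarith)] at this
        linarith
      · -- gap from il (shifted)
        have hd : |θ il + 2*π - θ a| ≤ π := by
          rw [abs_le]; constructor <;> linarith [(hb a).2]
        have hcos : Real.cos (θ il + 2*π - θ a) < 1/2 := by
          rw [show θ il + 2*π - θ a = (θ il - θ a) + ((1:ℤ):ℝ)*(2*π) by push_cast; ring,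
            Real.cos_add_int_mul_two_pi]
          exact hp il a (Ne.symm hail)
        have := gap_gt hd hcos
        rw [_root_.abs_of_nonneg (by linarith [(hb a).2])] at this
        linarith
    · -- θ a ∈ [-π, -2π/3]
      refine ⟨θ a + 2*π, ⟨1, by push_cast; ring⟩, ?_, ?_⟩
      · have hd : |θ a + 2*π - θ iu| ≤ π := by
          rw [abs_le]; constructor <;> linarith [(hb a).1]
        have hcos : Real.cos (θ a + 2*π - θ iu) < 1/2 := by
          rw [show θ a + 2*π - θ iu = (θ a - θ iu) + ((1:ℤ):ℝ)*(2*π) by push_cast; ring,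
            Real.cos_add_int_mul_two_pi]
          exact hp a iu haiu
        have := gap_gt hd hcos
        rw [_root_.abs_of_nonneg (by linarith [(hb a).1])] at this
        linarith
      · have hd : |θ il - θ a| ≤ π := by
          rw [abs_le]; constructor <;> linarith [(hb a).1]
        have := gap_gt hd (hp il a (Ne.symm hail))
        rw [_root_.abs_of_nonneg (by linarith)] at this
        linarith
  obtain ⟨ba, ⟨ka, hka⟩, hba1, hba2⟩ := hbeta a haiu hail
  obtain ⟨bb, ⟨kb, hkb⟩, hbb1, hbb2⟩ := hbeta b hbiu hbil
  have habs : |ba - bb| ≤ π/3 := by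
    rw [abs_le]; constructor <;> linarith
  have hcos : Real.cos (ba - bb) < 1/2 := by
    rw [show ba - bb = (θ a - θ b) + ((ka - kb : ℤ):ℝ)*(2*π) by rw [hka, hkb]; push_cast; ring,
      Real.cos_add_int_mul_two_pi]
    exact hp a b hab
  exact absurd (cos_ge_half habs) (by linarith)

lemma w_spread (φ : Fin 4 → ℝ) (hb : ∀ i, -(2*(π/3)) < φ i ∧ φ i < 2*(π/3))
    (hp : ∀ i j, i ≠ j → Real.cos (φ i - φ j) < 1/2) :
    ∃ ju jl, (π/3 < φ ju ∧ φ ju < 2*(π/3)) ∧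
      (-(2*(π/3)) < φ jl ∧ φ jl < -(π/3)) ∧ π < φ ju - φ jl := by
  have hπ := Real.pi_pos
  obtain ⟨ju, hju1, hju2⟩ := exists_up' φ hb hp
  obtain ⟨jl, hjl1, hjl2⟩ := exists_low' φ hb hp
  have hne : ju ≠ jl := by intro h; rw [h] at hju1; linarith
  refine ⟨ju, jl, ⟨hju1, hju2⟩, ⟨hjl1, hjl2⟩, ?_⟩
  by_contra hcon
  push_neg at hcon
  have hexist : ∀ (x y : Fin 4), x ≠ y → ∃ a b : Fin 4,
      a ≠ b ∧ a ≠ x ∧ a ≠ y ∧ b ≠ x ∧ b ≠ y := by decide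
  obtain ⟨a, b, hab, haju, hajl, hbju, hbjl⟩ := hexist ju jl hne
  have hmid : ∀ a, a ≠ ju → a ≠ jl → φ ju - 2*(π/3) < φ a ∧ φ a < φ ju - π/3 := by
    intro a haju hajl
    have hup : φ a ≤ π/3 := by
      by_contra hx
      push_neg at hx
      have h1 : |φ a - φ ju| ≤ π/3 := by
        rw [abs_le]; constructor <;> linarith [(hb a).2]
      exact absurd (cos_ge_half h1) (by linarith [hp a ju haju])
    have hlo : -(π/3) ≤ φ a := by
      by_contra hx
      push_neg at hx
      have h1 : |φ a - φ jl| ≤ π/3 := by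
        rw [abs_le]; constructor <;> linarith [(hb a).1]
      exact absurd (cos_ge_half h1) (by linarith [hp a jl hajl])
    have hd1 : |φ ju - φ a| ≤ π := by
      rw [abs_le]; constructor <;> linarith
    have hg1 := gap_gt hd1 (hp ju a (Ne.symm haju))
    rw [_root_.abs_of_nonneg (by linarith)] at hg1
    have hd2 : |φ a - φ jl| ≤ π := by
      rw [abs_le]; constructor <;> linarith
    have hg2 := gap_gt hd2 (hp a jl hajl)
    rw [_root_.abs_of_nonneg (by linarith)] at hg2
    constructor <;> linarith
  obtain ⟨h1a, h2a⟩ := hmid a haju hajl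
  obtain ⟨h1b, h2b⟩ := hmid b hbju hbjl
  have habs : |φ a - φ b| ≤ π/3 := by rw [abs_le]; constructor <;> linarith
  exact absurd (cos_ge_half habs) (by linarith [hp a b hab])

set_option maxHeartbeats 1000000 in
lemma key_ineq (r s θ φ : ℝ) (hr : 1 < r) (hs : 1 < s)
    (hθl : π/3 < θ) (hθφ : θ ≤ φ) (hφu : φ < 2*(π/3)) :
    (r*Real.cos θ - s*Real.cos φ - 1)^2 + (r*Real.sin θ - s*Real.sin φ)^2
      < max r s ^ 2 := by
  have hπ := Real.pi_pos
  have hθu : θ < 2*(π/3) := lt_of_le_of_lt hθφ hφu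
  have hφl : π/3 < φ := lt_of_lt_of_le hθl hθφ
  -- basic cos bounds
  have hcθu : Real.cos θ < 1/2 := by
    rw [← Real.cos_pi_div_three]
    apply Real.cos_lt_cos_of_nonneg_of_le_pi (by linarith) (by linarith) hθl
  have hcφu : Real.cos φ < 1/2 := by
    rw [← Real.cos_pi_div_three]
    apply Real.cos_lt_cos_of_nonneg_of_le_pi (by linarith) (by linarith) hφl
  have hc23 : Real.cos (2*(π/3)) = -(1/2) := by
    rw [show (2*(π/3) : ℝ) = π - π/3 by ring, Real.cos_pi_sub, Real.cos_pi_div_three]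
  have hcθl : -(1/2) < Real.cos θ := by
    rw [← hc23]
    apply Real.cos_lt_cos_of_nonneg_of_le_pi (by linarith) (by linarith) hθu
  have hcφl : -(1/2) < Real.cos φ := by
    rw [← hc23]
    apply Real.cos_lt_cos_of_nonneg_of_le_pi (by linarith) (by linarith) hφu
  have hmono : Real.cos φ ≤ Real.cos θ := by
    rcases eq_or_lt_of_le hθφ with h | h
    · rw [h]
    · exact (Real.cos_lt_cos_of_nonneg_of_le_pi (by linarith) (by linarith) h).le
  -- cos of difference
  have hC : 1/2 < Real.cos (φ - θ) := by
    rw [← Real.cos_pi_div_three]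
    apply Real.cos_lt_cos_of_nonneg_of_le_pi (by linarith) (by linarith)
    linarith
  -- the key trig inequality J ≥ 0
  have hJ : 0 ≤ Real.cos θ + Real.cos (φ - θ) - 1 - Real.cos φ := by
    have hsv : 0 < Real.sin (θ/2) := Real.sin_pos_of_pos_of_lt_pi (by linarith) (by linarith)
    have hsuv : Real.sin (θ/2) ≤ Real.sin (φ - θ/2) := by
      apply Real.strictMonoOn_sin.monotoneOn ?_ ?_ (by linarith)
      · exact Set.mem_Icc.2 ⟨by linarith, by linarith⟩
      · exact Set.mem_Icc.2 ⟨by linarith, by linarith⟩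
    have h1 : Real.cos θ = 1 - 2 * Real.sin (θ/2)^2 := by
      have hb := Real.sin_sq_add_cos_sq (θ/2)
      have hc := Real.cos_two_mul (θ/2)
      rw [show (2:ℝ)*(θ/2) = θ by ring] at hc
      linarith
    have h2 : Real.cos (φ - θ) = Real.cos (φ - θ/2) * Real.cos (θ/2)
        + Real.sin (φ - θ/2) * Real.sin (θ/2) := by
      rw [← Real.cos_sub]
      congr 1
      ring
    have h3 : Real.cos φ = Real.cos (φ - θ/2) * Real.cos (θ/2)
        - Real.sin (φ - θ/2) * Real.sin (θ/2) := by
      rw [← Real.cos_add]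
      congr 1
      ring
    have hid : Real.cos θ + Real.cos (φ - θ) - 1 - Real.cos φ
        = 2 * Real.sin (θ/2) * (Real.sin (φ - θ/2) - Real.sin (θ/2)) := by
      rw [h1, h2, h3]
      ring
    rw [hid]
    have h4 : 0 ≤ Real.sin (φ - θ/2) - Real.sin (θ/2) := by linarith
    positivity
  set cθ := Real.cos θ
  set cφ := Real.cos φ
  set C := Real.cos (φ - θ)
  have hexp : (r*Real.cos θ - s*Real.cos φ - 1)^2 + (r*Real.sin θ - s*Real.sin φ)^2
      = r^2 + s^2 + 1 - 2*r*s*C - 2*r*cθ + 2*s*cφ := by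
    have h1 : Real.sin θ ^2 + cθ^2 = 1 := Real.sin_sq_add_cos_sq θ
    have h2 : Real.sin φ ^2 + cφ^2 = 1 := Real.sin_sq_add_cos_sq φ
    have h3 : C = cφ * cθ + Real.sin φ * Real.sin θ := Real.cos_sub φ θ
    rw [h3]
    linear_combination (r^2) * h1 + (s^2) * h2
  rcases le_total r s with hrs | hrs
  · rw [max_eq_right hrs, hexp]
    have hrC : r/2 < r*C := by
      have := (mul_lt_mul_iff_right₀ (show (0:ℝ) < r by linarith)).2 hC
      linarith
    have hA1 : 0 ≤ (s - r) * (r*C - cφ) := mul_nonneg (by linarith) (by linarith)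
    have hr2 : 0 < r^2 - 1 := by
      have := one_lt_pow₀ hr two_ne_zero
      linarith
    have hA2 : 0 < (r^2 - 1) * (2*C - 1) := mul_pos hr2 (by linarith)
    have hA3 : 0 ≤ (r - 1) * (cθ - cφ) := mul_nonneg (by linarith) (by linarith)
    linarith [hA1, hA2, hA3, hJ]
  · rw [max_eq_left hrs, hexp]
    have hsC : s/2 < s*C := by
      have := (mul_lt_mul_iff_right₀ (show (0:ℝ) < s by linarith)).2 hC
      linarith
    have hA1 : 0 ≤ (r - s) * (s*C + cθ) := mul_nonneg (by linarith) (by linarith)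
    have hs2 : 0 < s^2 - 1 := by
      have := one_lt_pow₀ hs two_ne_zero
      linarith
    have hA2 : 0 < (s^2 - 1) * (2*C - 1) := mul_pos hs2 (by linarith)
    have hA3 : 0 ≤ (s - 1) * (cθ - cφ) := mul_nonneg (by linarith) (by linarith)
    linarith [hA1, hA2, hA3, hJ]

lemma key_contra (z w : ℂ) (hz : 1 < ‖z‖) (hw : 1 < ‖(w-1)‖)
    (hθ1 : π/3 < z.arg) (hθφ : z.arg ≤ (w-1).arg) (hφ2 : (w-1).arg < 2*(π/3))
    (h1 : ‖z‖ < ‖(z - w)‖)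
    (h2 : ‖(w-1)‖ < ‖(w - z)‖) : False := by
  set r := ‖z‖ with hr
  set s := ‖(w-1)‖ with hs
  set θ := z.arg with hθ
  set φ := (w-1).arg with hφ
  have hzeq : z = (↑(r * Real.cos θ) : ℂ) + (↑(r * Real.sin θ) : ℂ) * I := by
    conv_lhs => rw [← Complex.norm_mul_exp_arg_mul_I z]
    rw [Complex.exp_mul_I]
    push_cast
    rw [← Complex.ofReal_cos, ← Complex.ofReal_sin]
    push_cast
    ring
  have hweq : w - 1 = (↑(s * Real.cos φ) : ℂ) + (↑(s * Real.sin φ) : ℂ) * I := by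
    conv_lhs => rw [← Complex.norm_mul_exp_arg_mul_I (w-1)]
    rw [Complex.exp_mul_I]
    push_cast
    rw [← Complex.ofReal_cos, ← Complex.ofReal_sin]
    push_cast
    ring
  have hzw : z - w = (↑(r*Real.cos θ - s*Real.cos φ - 1) : ℂ)
      + (↑(r*Real.sin θ - s*Real.sin φ) : ℂ) * I := by
    have : z - w = z - (w - 1) - 1 := by ring
    rw [this, hzeq, hweq]
    push_cast
    ring
  have habs2 : ‖(z - w)‖ ^ 2
      = (r*Real.cos θ - s*Real.cos φ - 1)^2 + (r*Real.sin θ - s*Real.sin φ)^2 := by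
    rw [hzw, Complex.sq_norm, Complex.normSq_add_mul_I]
  have hki := key_ineq r s θ φ hz hw hθ1 hθφ hφ2
  rw [← habs2] at hki
  have hmax : max r s < ‖(z - w)‖ := by
    rw [max_lt_iff]
    exact ⟨h1, by rw [← norm_neg (w - z)] at h2; simpa [neg_sub] using h2⟩
  have h0 : (0:ℝ) ≤ max r s := le_max_of_le_left (by linarith)
  nlinarith [norm_nonneg (z - w)]

lemma lemma3core (z w : Fin 4 → ℂ)
    (hz1 : ∀ i, 1 < ‖(z i)‖)
    (hzy : ∀ i, ‖(z i)‖ < ‖(z i - 1)‖)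
    (hzz : ∀ i j, i ≠ j → ‖(z i)‖ < ‖(z i - z j)‖)
    (hw1 : ∀ i, 1 < ‖(w i - 1)‖)
    (hwx : ∀ i, ‖(w i - 1)‖ < ‖(w i)‖)
    (hww : ∀ i j, i ≠ j → ‖(w i - 1)‖ < ‖(w i - w j)‖)
    (hzw : ∀ i j, ‖(z i)‖ < ‖(z i - w j)‖)
    (hwz : ∀ i j, ‖(w i - 1)‖ < ‖(w i - z j)‖) : False := by
  have hπ := Real.pi_pos
  have hzne : ∀ i, z i ≠ 0 := by
    intro i h
    have := hz1 i
    rw [h] at this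
    simp at this
    linarith
  have hwne : ∀ i, w i - 1 ≠ 0 := by
    intro i h
    have := hw1 i
    rw [h] at this
    simp at this
    linarith
  set θ : Fin 4 → ℝ := fun i => (z i).arg with hθdef
  set φ : Fin 4 → ℝ := fun i => (w i - 1).arg with hφdef
  have hθb : ∀ i, -π ≤ θ i ∧ θ i ≤ π :=
    fun i => ⟨(Complex.neg_pi_lt_arg _).le, Complex.arg_le_pi _⟩
  -- angle of each z with the direction 1 exceeds π/3
  have hθg : ∀ i, π/3 < |θ i| := by
    intro i
    have hc : Real.cos (θ i - (1:ℂ).arg) < 1/2 := by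
      apply cosDelta (hzne i) one_ne_zero (hzy i)
      calc ‖(1:ℂ)‖ = 1 := by simp
        _ < ‖(z i)‖ := hz1 i
        _ < ‖(z i - 1)‖ := hzy i
    rw [Complex.arg_one, sub_zero] at hc
    exact gap_gt (abs_le.2 (hθb i)) hc
  have hθp : ∀ i j, i ≠ j → Real.cos (θ i - θ j) < 1/2 := by
    intro i j hij
    apply cosDelta (hzne i) (hzne j) (hzz i j hij)
    rw [← norm_neg (z i - z j)]
    simpa [neg_sub] using hzz j i (Ne.symm hij)
  -- w side: |φ| < 2π/3
  have hφb : ∀ i, -(2*(π/3)) < φ i ∧ φ i < 2*(π/3) := by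
    intro i
    have hc : Real.cos (φ i - (-1 : ℂ).arg) < 1/2 := by
      apply cosDelta (hwne i) (by norm_num : (-1 : ℂ) ≠ 0)
      · rw [show w i - 1 - (-1) = w i by ring]
        exact hwx i
      · rw [show w i - 1 - (-1) = w i by ring]
        simp only [norm_neg, norm_one]
        calc (1:ℝ) < ‖(w i - 1)‖ := hw1 i
          _ < ‖(w i)‖ := hwx i
    rw [Complex.arg_neg_one] at hc
    have hcφ : -(1/2) < Real.cos (φ i) := by
      have : Real.cos (φ i - π) = -Real.cos (φ i) := by
        rw [← Real.cos_neg, neg_sub, Real.cos_pi_sub]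
      rw [this] at hc
      linarith
    have hφbnd : |φ i| ≤ π := abs_le.2 ⟨(Complex.neg_pi_lt_arg _).le, Complex.arg_le_pi _⟩
    by_contra hx
    push_neg at hx
    have habs : 2*(π/3) ≤ |φ i| := by
      rcases le_or_gt (φ i) (-(2*(π/3))) with h | h
      · rcases abs_cases (φ i) with ⟨he, _⟩ | ⟨he, _⟩ <;> rw [he] <;> linarith
      · have h2 := hx h
        rw [_root_.abs_of_nonneg (by linarith)]
        exact h2
    have hcle : Real.cos (φ i) ≤ -(1/2) := by
      rw [← Real.cos_abs]
      rw [show -(1/2 : ℝ) = Real.cos (2*(π/3)) by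
        rw [show (2*(π/3) : ℝ) = π - π/3 by ring, Real.cos_pi_sub, Real.cos_pi_div_three]]
      exact Real.cos_le_cos_of_nonneg_of_le_pi (by linarith) hφbnd habs
    linarith
  have hφp : ∀ i j, i ≠ j → Real.cos (φ i - φ j) < 1/2 := by
    intro i j hij
    have := cosDelta (hwne i) (hwne j) ?_ ?_
    · exact this
    · rw [show w i - 1 - (w j - 1) = w i - w j by ring]
      exact hww i j hij
    · rw [show w i - 1 - (w j - 1) = w i - w j by ring, ← norm_neg (w i - w j)]
      simpa [neg_sub] using hww j i (Ne.symm hij)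
  obtain ⟨iu, il, ⟨hiu1, hiu2⟩, ⟨hil1, hil2⟩, hchain⟩ := z_spread θ hθb hθg hθp
  obtain ⟨ju, jl, ⟨hju1, hju2⟩, ⟨hjl1, hjl2⟩, hwchain⟩ := w_spread φ hφb hφp
  rcases le_or_gt (θ iu) (φ ju) with hcase | hcase
  · exact key_contra (z iu) (w ju) (hz1 iu) (hw1 ju) hiu1 hcase hju2
      (hzw iu ju) (hwz ju iu)
  · -- conjugate configuration
    have hlowlt : φ jl < θ il := by linarith
    have haux : (starRingEnd ℂ) (w jl) - 1 = (starRingEnd ℂ) (w jl - 1) := by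
      rw [map_sub, map_one]
    have hargz : ((starRingEnd ℂ) (z il)).arg = -(θ il) := by
      rw [Complex.arg_conj]
      have hne : (z il).arg ≠ π := by
        intro h
        have : θ il = π := h
        rw [this] at hil2
        linarith
      simp [hne]; rfl
    have hargw : ((starRingEnd ℂ) (w jl) - 1).arg = -(φ jl) := by
      rw [haux, Complex.arg_conj]
      have hne : (w jl - 1).arg ≠ π := by
        intro h
        have : φ jl = π := h
        rw [this] at hjl2
        linarith
      simp [hne]; rfl
    refine key_contra ((starRingEnd ℂ) (z il)) ((starRingEnd ℂ) (w jl))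
      ?_ ?_ ?_ ?_ ?_ ?_ ?_
    · rw [Complex.norm_conj]; exact hz1 il
    · rw [haux, Complex.norm_conj]; exact hw1 jl
    · rw [hargz]; linarith
    · rw [hargz, hargw]; linarith
    · rw [hargw]; linarith
    · rw [← map_sub, Complex.norm_conj, Complex.norm_conj]
      exact hzw il jl
    · rw [haux, ← map_sub, Complex.norm_conj, Complex.norm_conj]
      exact hwz jl il

def cc : EE ≃ₗᵢ[ℝ] ℂ :=
  (Complex.isometryOfOrthonormal (EuclideanSpace.basisFun (Fin 2) ℝ)).symm

lemma abs_cc (p q : EE) : ‖(cc p - cc q)‖ = dist p q := by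
  rw [← Complex.dist_eq, ← LinearIsometryEquiv.dist_map cc]

lemma vne {p q : EE} (h : p ≠ q) : cc p - cc q ≠ 0 := by
  intro hc
  have : ‖(cc p - cc q)‖ = 0 := by rw [hc]; simp
  rw [abs_cc] at this
  exact h (by rwa [dist_eq_zero] at this)

lemma deg_le_five (X : Finset EE) (x : EE) :
    (X.filter (Pnn X x)).card ≤ 5 := by
  by_contra hcon
  push_neg at hcon
  obtain ⟨t, hts, htc⟩ :=
    Finset.exists_subset_card_eq (show 6 ≤ (X.filter (Pnn X x)).card by omega)
  set e := Finset.equivFinOfCardEq htc with he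
  set y : Fin 6 → EE := fun i => (e.symm i : EE) with hy
  have hyP : ∀ i, Pnn X x (y i) := fun i =>
    (Finset.mem_filter.1 (hts (e.symm i).2)).2
  have hyinj : ∀ i j : Fin 6, i ≠ j → y i ≠ y j := fun i j hij hq =>
    hij (e.symm.injective (Subtype.ext hq))
  apply six_dirs (fun i => cc (y i) - cc x)
  intro i j hij
  have key : ∀ i j : Fin 6, i ≠ j →
      ‖(cc (y i) - cc x)‖ <
        ‖((cc (y i) - cc x) - (cc (y j) - cc x))‖ := by
    intro i j hij
    rw [show (cc (y i) - cc x) - (cc (y j) - cc x) = cc (y i) - cc (y j) by ring,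
      abs_cc, abs_cc]
    exact (hyP i).2.2.2 (y j) (hyP j).2.1 (Ne.symm (hyinj i j hij)) (hyP j).2.2.1
  have h2 : ‖(cc (y j) - cc x)‖ <
      ‖((cc (y i) - cc x) - (cc (y j) - cc x))‖ := by
    rw [show (cc (y i) - cc x) - (cc (y j) - cc x)
        = -((cc (y j) - cc x) - (cc (y i) - cc x)) by ring, norm_neg]
    exact key j i (Ne.symm hij)
  exact cosDelta (vne ((hyP i).2.2.1)) (vne ((hyP j).2.2.1)) (key i j hij) h2

lemma mutual_of_five {X : Finset EE}
    (hdist : ∀ x ∈ X, ∀ y ∈ X, ∀ x' ∈ X, ∀ y' ∈ X, x ≠ y → x' ≠ y' →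
      dist x y = dist x' y' → ({x, y} : Set EE) = {x', y'})
    (hcard : 2 ≤ X.card) {x : EE} (hx : x ∈ X)
    (hx5 : 5 ≤ (X.filter (Pnn X x)).card) :
    ∃ y, Pnn X y x ∧ Pnn X x y := by
  obtain ⟨y0, hy0⟩ := nn_exists hdist hcard hx
  refine ⟨y0, hy0, ?_⟩
  by_contra hcon
  obtain ⟨t, hts, htc⟩ := Finset.exists_subset_card_eq hx5
  set e := Finset.equivFinOfCardEq htc with he
  set y : Fin 5 → EE := fun i => (e.symm i : EE) with hy
  have hyP : ∀ i, Pnn X x (y i) := fun i =>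
    (Finset.mem_filter.1 (hts (e.symm i).2)).2
  have hyinj : ∀ i j : Fin 5, i ≠ j → y i ≠ y j := fun i j hij hq =>
    hij (e.symm.injective (Subtype.ext hq))
  have hy0ne : ∀ i, y0 ≠ y i := by
    intro i h
    exact hcon (h ▸ hyP i)
  have hy0x : y0 ≠ x := (hy0.2.2.1).symm
  have hdy0 : ∀ i, dist y0 x < dist (y i) x := by
    intro i
    have := hy0.2.2.2 (y i) (hyP i).2.1 (hyP i).2.2.1 (Ne.symm (hy0ne i))
    rwa [dist_comm x y0, dist_comm x (y i)] at this
  have hzw : ∀ i, dist (y i) x < dist (y i) y0 :=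
    fun i => (hyP i).2.2.2 y0 hy0.1 (hy0ne i) hy0x
  have hzz : ∀ i j : Fin 5, i ≠ j → dist (y i) x < dist (y i) (y j) :=
    fun i j hij => (hyP i).2.2.2 (y j) (hyP j).2.1 (Ne.symm (hyinj i j hij)) (hyP j).2.2.1
  set v : Fin 6 → ℂ := Fin.snoc (fun i : Fin 5 => cc (y i) - cc x) (cc y0 - cc x) with hv
  apply six_dirs v
  have hvcast : ∀ k : Fin 5, v k.castSucc = cc (y k) - cc x := by
    intro k
    rw [hv, Fin.snoc_castSucc]
  have hvlast : v (Fin.last 5) = cc y0 - cc x := by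
    rw [hv, Fin.snoc_last]
  have habs2 : ∀ p q : EE, ‖((cc p - cc x) - (cc q - cc x))‖ = dist p q := by
    intro p q
    rw [show (cc p - cc x) - (cc q - cc x) = cc p - cc q by ring, abs_cc]
  have habs1 : ∀ p : EE, ‖(cc p - cc x)‖ = dist p x := fun p => abs_cc p x
  -- the main pairwise claim, oriented
  have main : ∀ i j, i ≠ j →
      ‖(v i)‖ < ‖(v i - v j)‖ := by
    intro i j hij
    rcases Fin.eq_castSucc_or_eq_last i with ⟨i', rfl⟩ | rfl <;>
      rcases Fin.eq_castSucc_or_eq_last j with ⟨j', rfl⟩ | rfl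
    · have hij' : i' ≠ j' := fun h => hij (by rw [h])
      rw [hvcast, hvcast, habs1, habs2]
      exact hzz i' j' hij'
    · rw [hvcast, hvlast, habs1, habs2]
      exact hzw i'
    · rw [hvlast, hvcast, habs1, habs2]
      have h1 := hdy0 j'
      have h2 := hzw j'
      rw [dist_comm y0 (y j')]
      linarith
    · exact absurd rfl hij
  intro i j hij
  have h1 := main i j hij
  have h2' := main j i (Ne.symm hij)
  have h2 : ‖(v j)‖ < ‖(v i - v j)‖ := by
    rw [show v i - v j = -(v j - v i) by ring, norm_neg]
    exact h2'
  have hvi : v i ≠ 0 := by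
    intro h
    rw [h, zero_sub, norm_neg] at h2
    exact lt_irrefl _ h2
  have hvj : v j ≠ 0 := by
    intro h
    rw [h, sub_zero] at h1
    exact lt_irrefl _ h1
  exact cosDelta hvi hvj h1 h2

lemma no_double_five {X : Finset EE} {x y : EE}
    (hxy : Pnn X x y) (hyx : Pnn X y x)
    (hx5 : 5 ≤ (X.filter (Pnn X x)).card)
    (hy5 : 5 ≤ (X.filter (Pnn X y)).card) : False := by
  have hyx' : y ≠ x := hxy.2.2.1
  have hd0 : 0 < dist y x := dist_pos.2 hyx'
  -- in-neighbour sets minus the partner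
  have hyDx : y ∈ X.filter (Pnn X x) := Finset.mem_filter.2 ⟨hxy.2.1, hxy⟩
  have hxDy : x ∈ X.filter (Pnn X y) := Finset.mem_filter.2 ⟨hyx.2.1, hyx⟩
  have hzt : ((X.filter (Pnn X x)).erase y).card = 4 := by
    rw [Finset.card_erase_of_mem hyDx]
    have := deg_le_five X x
    omega
  have hwt : ((X.filter (Pnn X y)).erase x).card = 4 := by
    rw [Finset.card_erase_of_mem hxDy]
    have := deg_le_five X y
    omega
  set ze := Finset.equivFinOfCardEq hzt with hze
  set we := Finset.equivFinOfCardEq hwt with hwe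
  set zp : Fin 4 → EE := fun i => (ze.symm i : EE) with hzp
  set wp : Fin 4 → EE := fun i => (we.symm i : EE) with hwp
  have hzP : ∀ i, Pnn X x (zp i) := fun i =>
    (Finset.mem_filter.1 (Finset.mem_of_mem_erase (ze.symm i).2)).2
  have hwP : ∀ i, Pnn X y (wp i) := fun i =>
    (Finset.mem_filter.1 (Finset.mem_of_mem_erase (we.symm i).2)).2
  have hzny : ∀ i, zp i ≠ y := fun i => Finset.ne_of_mem_erase (ze.symm i).2
  have hwnx : ∀ i, wp i ≠ x := fun i => Finset.ne_of_mem_erase (we.symm i).2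
  have hzinj : ∀ i j : Fin 4, i ≠ j → zp i ≠ zp j := fun i j hij hq =>
    hij (ze.symm.injective (Subtype.ext hq))
  have hwinj : ∀ i j : Fin 4, i ≠ j → wp i ≠ wp j := fun i j hij hq =>
    hij (we.symm.injective (Subtype.ext hq))
  have hznw : ∀ i j, zp i ≠ wp j := by
    intro i j h
    have : x = y := nn_unique (h ▸ hzP i) (hwP j)
    exact hyx' this.symm
  -- normalized complex coordinates
  set ζ := cc y - cc x with hζ
  have hζ0 : ζ ≠ 0 := vne hyx'
  set m : EE → ℂ := fun p => (cc p - cc x) / ζ with hm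
  have hmy : m y = 1 := div_self hζ0
  have hmx : m x = 0 := by
    rw [hm]
    simp
  have hmsub : ∀ p q : EE, m p - m q = (cc p - cc q) / ζ := by
    intro p q
    rw [hm]
    simp only [div_sub_div_same]
    congr 1
    ring
  have habsm : ∀ p q : EE, ‖(m p - m q)‖ = dist p q / dist y x := by
    intro p q
    rw [hmsub, norm_div, abs_cc, hζ, abs_cc]
  have habsm0 : ∀ p : EE, ‖(m p)‖ = dist p x / dist y x := by
    intro p
    have := habsm p x
    rwa [hmx, sub_zero] at this
  have habsm1 : ∀ p : EE, ‖(m p - 1)‖ = dist p y / dist y x := by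
    intro p
    have := habsm p y
    rwa [hmy] at this
  -- distance facts
  have hdz1 : ∀ i, dist y x < dist (zp i) x := by
    intro i
    have := hyx.2.2.2 (zp i) (hzP i).2.1 (hzP i).2.2.1 (hzny i)
    rwa [dist_comm x y, dist_comm x (zp i)] at this
  have hdzy : ∀ i, dist (zp i) x < dist (zp i) y :=
    fun i => (hzP i).2.2.2 y hxy.2.1 (Ne.symm (hzny i)) hyx'
  have hdzz : ∀ i j, i ≠ j → dist (zp i) x < dist (zp i) (zp j) :=
    fun i j hij => (hzP i).2.2.2 (zp j) (hzP j).2.1 (Ne.symm (hzinj i j hij)) (hzP j).2.2.1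
  have hdw1 : ∀ i, dist y x < dist (wp i) y := by
    intro i
    have := hxy.2.2.2 (wp i) (hwP i).2.1 (hwP i).2.2.1 (hwnx i)
    rwa [dist_comm y (wp i)] at this
  have hdwx : ∀ i, dist (wp i) y < dist (wp i) x :=
    fun i => (hwP i).2.2.2 x hyx.2.1 (Ne.symm (hwnx i)) (Ne.symm hyx')
  have hdww : ∀ i j, i ≠ j → dist (wp i) y < dist (wp i) (wp j) :=
    fun i j hij => (hwP i).2.2.2 (wp j) (hwP j).2.1 (Ne.symm (hwinj i j hij)) (hwP j).2.2.1
  have hdzw : ∀ i j, dist (zp i) x < dist (zp i) (wp j) :=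
    fun i j => (hzP i).2.2.2 (wp j) (hwP j).2.1 (Ne.symm (hznw i j)) (hwnx j)
  have hdwz : ∀ i j, dist (wp i) y < dist (wp i) (zp j) :=
    fun i j => (hwP i).2.2.2 (zp j) (hzP j).2.1 (hznw j i) (hzny j)
  -- apply the core lemma
  apply lemma3core (fun i => m (zp i)) (fun i => m (wp i))
  · intro i
    show 1 < ‖(m (zp i))‖
    rw [habsm0, one_lt_div hd0]
    exact hdz1 i
  · intro i
    show ‖(m (zp i))‖ < ‖(m (zp i) - 1)‖
    rw [habsm0, habsm1]
    exact div_lt_div_of_pos_right (hdzy i) hd0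
  · intro i j hij
    show ‖(m (zp i))‖ < ‖(m (zp i) - m (zp j))‖
    rw [habsm0, habsm]
    exact div_lt_div_of_pos_right (hdzz i j hij) hd0
  · intro i
    show 1 < ‖(m (wp i) - 1)‖
    rw [habsm1, one_lt_div hd0]
    exact hdw1 i
  · intro i
    show ‖(m (wp i) - 1)‖ < ‖(m (wp i))‖
    rw [habsm1, habsm0]
    exact div_lt_div_of_pos_right (hdwx i) hd0
  · intro i j hij
    show ‖(m (wp i) - 1)‖ < ‖(m (wp i) - m (wp j))‖
    rw [habsm1, habsm]
    exact div_lt_div_of_pos_right (hdww i j hij) hd0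
  · intro i j
    show ‖(m (zp i))‖ < ‖(m (zp i) - m (wp j))‖
    rw [habsm0, habsm]
    exact div_lt_div_of_pos_right (hdzw i j) hd0
  · intro i j
    show ‖(m (wp i) - 1)‖ < ‖(m (wp i) - m (zp j))‖
    rw [habsm1, habsm]
    exact div_lt_div_of_pos_right (hdwz i j) hd0

end NN7

end

open NN7 in
theorem stmt_6 (X : Finset (EuclideanSpace ℝ (Fin 2))) (hcard : 2 ≤ X.card)
    (hdist : ∀ x ∈ X, ∀ y ∈ X, ∀ x' ∈ X, ∀ y' ∈ X, x ≠ y → x' ≠ y' →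
      dist x y = dist x' y' →
      ({x, y} : Set (EuclideanSpace ℝ (Fin 2))) = {x', y'}) :
    9 * {x : EuclideanSpace ℝ (Fin 2) | x ∈ X ∧
        ∀ y ∈ X, y ≠ x →
          ¬ (∀ z ∈ X, z ≠ y → z ≠ x → dist y x < dist y z)}.ncard
      ≤ 7 * X.card := by
  classical
  set T : Finset EE := X.filter (fun x => ∃ y, Pnn X x y) with hT
  have hTX : T ⊆ X := Finset.filter_subset _ _
  -- identify the exceptional set with X \ T
  have hSeq : {x : EuclideanSpace ℝ (Fin 2) | x ∈ X ∧
      ∀ y ∈ X, y ≠ x → ¬ (∀ z ∈ X, z ≠ y → z ≠ x → dist y x < dist y z)}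
      = ↑(X \ T) := by
    ext x
    simp only [Set.mem_setOf_eq, Finset.coe_sdiff, Set.mem_diff, Finset.mem_coe,
      hT, Finset.mem_filter, not_and]
    constructor
    · rintro ⟨hx, hcond⟩
      refine ⟨hx, fun _ hex => ?_⟩
      obtain ⟨y, hP⟩ := hex
      exact hcond y hP.2.1 hP.2.2.1 hP.2.2.2
    · rintro ⟨hx, hnex⟩
      refine ⟨hx, fun y hy hyx hcond => hnex hx ⟨y, hx, hy, hyx, hcond⟩⟩
  rw [hSeq, Set.ncard_coe_finset]
  -- counting
  have hparts : X = T.biUnion (fun x => X.filter (Pnn X x)) := by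
    ext y
    simp only [Finset.mem_biUnion, Finset.mem_filter, hT]
    constructor
    · intro hy
      obtain ⟨x, hP⟩ := nn_exists hdist hcard hy
      exact ⟨x, ⟨hP.1, ⟨y, hP⟩⟩, hy, hP⟩
    · rintro ⟨x, _, hy, _⟩
      exact hy
  have hdisj : ∀ x ∈ T, ∀ x' ∈ T, x ≠ x' →
      Disjoint (X.filter (Pnn X x)) (X.filter (Pnn X x')) := by
    intro x _ x' _ hne
    rw [Finset.disjoint_left]
    intro y hy hy'
    exact hne (nn_unique (Finset.mem_filter.1 hy).2 (Finset.mem_filter.1 hy').2)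
  have hsum : X.card = ∑ x ∈ T, (X.filter (Pnn X x)).card := by
    conv_lhs => rw [hparts]
    exact Finset.card_biUnion hdisj
  set F : Finset EE := T.filter (fun x => 5 ≤ (X.filter (Pnn X x)).card) with hF
  have hFT : F ⊆ T := Finset.filter_subset _ _
  have hF5 : ∀ x ∈ F, 5 ≤ (X.filter (Pnn X x)).card := fun x hx => (Finset.mem_filter.1 hx).2
  have hFX : ∀ x ∈ F, x ∈ X := fun x hx => hTX (hFT hx)
  -- the sum estimate
  have hbound : X.card ≤ 4 * T.card + F.card := by
    rw [hsum]
    calc ∑ x ∈ T, (X.filter (Pnn X x)).card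
        ≤ ∑ x ∈ T, (4 + if x ∈ F then 1 else 0) := by
          apply Finset.sum_le_sum
          intro x hxT
          by_cases hxF : x ∈ F
          · rw [if_pos hxF]
            exact le_trans (deg_le_five X x) (by norm_num)
          · rw [if_neg hxF]
            have : ¬ 5 ≤ (X.filter (Pnn X x)).card := by
              intro h5
              exact hxF (Finset.mem_filter.2 ⟨hxT, h5⟩)
            omega
      _ = 4 * T.card + F.card := by
          rw [Finset.sum_add_distrib, Finset.sum_const, smul_eq_mul, mul_comm,
            Finset.sum_ite_mem, Finset.sum_const, smul_eq_mul, mul_one,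
            Finset.inter_eq_right.2 hFT]
  -- mutual pairing injection
  have hmut' : ∀ x : EE, ∃ y, x ∈ F → (Pnn X y x ∧ Pnn X x y) := by
    intro x
    by_cases hx : x ∈ F
    · obtain ⟨y, h⟩ := mutual_of_five hdist hcard (hFX x hx) (hF5 x hx)
      exact ⟨y, fun _ => h⟩
    · exact ⟨x, fun h => absurd h hx⟩
  choose g hg using hmut'
  have hmaps : ∀ x ∈ F, g x ∈ T \ F := by
    intro x hx
    obtain ⟨h1, h2⟩ := hg x hx
    refine Finset.mem_sdiff.2 ⟨Finset.mem_filter.2 ⟨h1.1, ⟨x, h1⟩⟩, ?_⟩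
    intro hgF
    exact (no_double_five h2 h1 (hF5 x hx) (hF5 _ hgF)).elim
  have hinj : Set.InjOn g ↑F := by
    intro x1 h1 x2 h2 heq
    have p1 := (hg x1 h1).2
    have p2 := (hg x2 h2).2
    rw [heq] at p1
    exact nn_unique p1 p2
  have hcardF : F.card ≤ (T \ F).card :=
    Finset.card_le_card_of_injOn g hmaps hinj
  have hsd : (T \ F).card = T.card - F.card := Finset.card_sdiff_of_subset hFT
  have hcardFT : F.card ≤ T.card := Finset.card_le_card hFT
  have hTcard : T.card ≤ X.card := Finset.card_le_card hTX
  have hXT : (X \ T).card = X.card - T.card := Finset.card_sdiff_of_subset hTX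
  omega
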